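/- Under hypotheses (P1)–(P3) with f(t,·) of class C¹ and Kγ/α < 1, for each fixed t ≥ 0 the map η ↦ G(t,η) = η − ∫₀ᵗ Φ(t,s) f(s, y(s,t,η)) ds is C¹ and its Jacobian matrix equals ∂G/∂η (t,η) = Φ(t,0) · ∂y(0,t,η)/∂η, where ∂y(0,t,η)/∂η is the solution at time 0 of the variational equation along y(·,t,η). In particular the Jacobian determinant is positive for every (t,η). -/

import Mathlib

open Real MeasureTheory Filter Topology

set_option maxHeartbeats 1000000
set_option synthInstance.maxHeartbeats 1000000

theorem stmt17 (n : ℕ) (K α γ μ M : ℝ)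
    (hK : 1 ≤ K) (hα : 0 < α) (hγ : 0 < γ) (hμ : 0 < μ) (hM : 0 < M)
    (A : ℝ → (EuclideanSpace ℝ (Fin n)) →L[ℝ] (EuclideanSpace ℝ (Fin n)))
    (hAcont : Continuous A) (hAbdd : ∀ t, 0 ≤ t → ‖A t‖ ≤ M)
    (Φ : ℝ → ℝ → ((EuclideanSpace ℝ (Fin n)) →L[ℝ] (EuclideanSpace ℝ (Fin n))))
    (hΦid : ∀ s, Φ s s = ContinuousLinearMap.id ℝ (EuclideanSpace ℝ (Fin n)))
    (hΦderiv : ∀ s ξ t, HasDerivAt (fun r => Φ r s ξ) (A t (Φ t s ξ)) t)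
    (hΦcocycle : ∀ t s r, (Φ t s).comp (Φ s r) = Φ t r)
    (hΦdecay : ∀ s t, 0 ≤ s → s ≤ t → ‖Φ t s‖ ≤ K * Real.exp (-α * (t - s)))
    (f : ℝ → (EuclideanSpace ℝ (Fin n)) → (EuclideanSpace ℝ (Fin n)))
    (hfcont : Continuous fun p : ℝ × (EuclideanSpace ℝ (Fin n)) => f p.1 p.2)
    (hflip : ∀ t u v, 0 ≤ t → ‖f t u - f t v‖ ≤ γ * ‖u - v‖)
    (hfbdd : ∀ t u, 0 ≤ t → ‖f t u‖ ≤ μ)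
    (hsmall : K * γ / α < 1)
    (y : ℝ → (EuclideanSpace ℝ (Fin n)) → ℝ → (EuclideanSpace ℝ (Fin n)))
    (hyinit : ∀ τ η, y τ η τ = η)
    (hyderiv : ∀ τ η t, 0 ≤ t → HasDerivAt (y τ η) (A t (y τ η t) + f t (y τ η t)) t)
    (Df : ℝ → (EuclideanSpace ℝ (Fin n)) → ((EuclideanSpace ℝ (Fin n)) →L[ℝ] (EuclideanSpace ℝ (Fin n))))
    (hDf : ∀ t x, 0 ≤ t → HasFDerivAt (f t) (Df t x) x)
    (hDfcont : Continuous fun p : ℝ × (EuclideanSpace ℝ (Fin n)) => Df p.1 p.2)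
    (Dy : ℝ → (EuclideanSpace ℝ (Fin n)) → ℝ → ((EuclideanSpace ℝ (Fin n)) →L[ℝ] (EuclideanSpace ℝ (Fin n))))
    (hDyinit : ∀ τ η, Dy τ η τ = ContinuousLinearMap.id ℝ (EuclideanSpace ℝ (Fin n)))
    (hDyode : ∀ τ η s, 0 ≤ s →
      HasDerivAt (Dy τ η) ((A s + Df s (y τ η s)).comp (Dy τ η s)) s)
    (hDy : ∀ τ η s, HasFDerivAt (fun ζ => y τ ζ s) (Dy τ η s) η) :
    ∀ t, 0 ≤ t →
      (∀ η : (EuclideanSpace ℝ (Fin n)), HasFDerivAt (fun ζ : (EuclideanSpace ℝ (Fin n)) => ζ - ∫ s in (0:ℝ)..t, Φ t s (f s (y t ζ s)))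
          ((Φ t 0).comp (Dy t η 0)) η) ∧
      (Continuous fun η : (EuclideanSpace ℝ (Fin n)) => (Φ t 0).comp (Dy t η 0)) ∧
      (∀ η : (EuclideanSpace ℝ (Fin n)), 0 < LinearMap.det ((Φ t 0).comp (Dy t η 0)).toLinearMap) := by
  classical
  intro t ht
  have hγ0 : (0:ℝ) ≤ γ := hγ.le
  have hMγ : (0:ℝ) < M + γ := by positivity
  -- Lipschitz constant for f t
  have hfl : ∀ s : ℝ, 0 ≤ s → LipschitzWith γ.toNNReal (f s) := by
    intro s hs
    apply LipschitzWith.of_dist_le_mul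
    intro u v
    simpa [dist_eq_norm, Real.coe_toNNReal γ hγ0] using hflip s u v hs
  have hDfγ : ∀ s x, 0 ≤ s → ‖Df s x‖ ≤ γ := by
    intro s x hs
    have := (hDf s x hs).le_of_lipschitz (hfl s hs)
    simpa [Real.coe_toNNReal γ hγ0] using this
  -- operator-valued derivative of r ↦ Φ r u
  let b := (EuclideanSpace.basisFun (Fin n) ℝ).toBasis
  let ψ : ((EuclideanSpace ℝ (Fin n)) →L[ℝ] (EuclideanSpace ℝ (Fin n))) ≃ₗ[ℝ]
      (Fin n → EuclideanSpace ℝ (Fin n)) :=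
    LinearMap.toContinuousLinearMap.symm.trans (b.constr ℝ).symm
  let ψL := ψ.toContinuousLinearEquiv
  have hψ : ∀ T : (EuclideanSpace ℝ (Fin n)) →L[ℝ] (EuclideanSpace ℝ (Fin n)),
      ψL T = fun i => T (b i) := fun T => rfl
  have opDeriv : ∀ (u s : ℝ), HasDerivAt (fun r => Φ r u) ((A s).comp (Φ s u)) s := by
    intro u s
    have h1 : HasDerivAt (fun r => ψL (Φ r u)) (ψL ((A s).comp (Φ s u))) s := by
      rw [hψ ((A s).comp (Φ s u))]
      exact hasDerivAt_pi.2 fun i => hΦderiv u (b i) s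
    have h2 := ((ψL.symm.hasFDerivAt).comp_hasDerivAt s h1)
    simpa [Function.comp_def] using h2
  have contΦfst : ∀ u : ℝ, Continuous fun r => Φ r u := fun u =>
    continuous_iff_continuousAt.2 fun s => (opDeriv u s).continuousAt
  have hcomp_id : ∀ r : ℝ, (Φ r 0).comp (Φ 0 r) = ContinuousLinearMap.id ℝ _ := fun r => by
    rw [hΦcocycle r 0 r, hΦid]
  have hcomp_id' : ∀ r : ℝ, (Φ 0 r).comp (Φ r 0) = ContinuousLinearMap.id ℝ _ := fun r => by
    rw [hΦcocycle 0 r 0, hΦid]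
  let uΦ : ℝ → ((EuclideanSpace ℝ (Fin n)) →L[ℝ] (EuclideanSpace ℝ (Fin n)))ˣ := fun r =>
    { val := Φ r 0, inv := Φ 0 r,
      val_inv := by rw [ContinuousLinearMap.mul_def, hcomp_id r]; rfl,
      inv_val := by rw [ContinuousLinearMap.mul_def, hcomp_id' r]; rfl }
  have invDeriv : ∀ s : ℝ, HasDerivAt (fun r => Φ 0 r) (-((Φ 0 s).comp (A s))) s := by
    intro s
    have h0 := hasFDerivAt_ringInverse (𝕜 := ℝ) (uΦ s)
    have h1 := h0.comp_hasDerivAt s (opDeriv 0 s)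
    have h2 : (fun r : ℝ => Ring.inverse (Φ r 0)) = fun r => Φ 0 r := by
      funext r; exact Ring.inverse_unit (uΦ r)
    simp only [Function.comp_def] at h1
    rw [h2] at h1
    refine h1.congr_deriv ?_
    have hval : (Φ s 0) * (Φ 0 s) = 1 := (uΦ s).val_inv
    have hinvcoe : (↑(uΦ s)⁻¹ : (EuclideanSpace ℝ (Fin n)) →L[ℝ] (EuclideanSpace ℝ (Fin n)))
        = Φ 0 s := rfl
    rw [hinvcoe]
    have hc1 : ((A s).comp (Φ s 0)) = (A s) * (Φ s 0) := rfl
    rw [hc1, ContinuousLinearMap.neg_apply, ContinuousLinearMap.mulLeftRight_apply]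
    have hc2 : ((Φ 0 s).comp (A s)) = (Φ 0 s) * (A s) := rfl
    rw [hc2, mul_assoc, mul_assoc, hval, mul_one]
  have contΦ0 : Continuous fun r : ℝ => Φ 0 r :=
    continuous_iff_continuousAt.2 fun s => (invDeriv s).continuousAt
  -- variation of constants identity
  have key : ∀ ζ, (∫ s in (0:ℝ)..t, Φ t s (f s (y t ζ s))) = ζ - Φ t 0 (y t ζ 0) := by
    intro ζ
    have huIcc : Set.uIcc (0:ℝ) t = Set.Icc 0 t := Set.uIcc_of_le ht
    have hYc : ContinuousOn (y t ζ) (Set.Icc 0 t) := fun s hs =>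
      ((hyderiv t ζ s hs.1).continuousAt).continuousWithinAt
    have hInt : ContinuousOn (fun s => (Φ 0 s) (f s (y t ζ s))) (Set.Icc 0 t) := by
      have h1 : ContinuousOn (fun s => f s (y t ζ s)) (Set.Icc 0 t) := by
        have := hfcont.comp_continuousOn (continuousOn_id.prodMk hYc); exact this
      exact (contΦ0.continuousOn).clm_apply h1
    have hq : ∀ s ∈ Set.uIcc (0:ℝ) t,
        HasDerivAt (fun r => Φ 0 r (y t ζ r)) ((Φ 0 s) (f s (y t ζ s))) s := by
      intro s hs
      rw [huIcc] at hs
      have h := (invDeriv s).clm_apply (hyderiv t ζ s hs.1)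
      refine h.congr_deriv ?_
      simp [ContinuousLinearMap.neg_apply, ContinuousLinearMap.comp_apply, map_add]
    have hint : IntervalIntegrable (fun s => (Φ 0 s) (f s (y t ζ s))) volume 0 t := by
      apply ContinuousOn.intervalIntegrable
      rwa [huIcc]
    have ftc := intervalIntegral.integral_eq_sub_of_hasDerivAt hq hint
    have h3 := congrArg (fun z => Φ t 0 z) ftc
    rw [← ContinuousLinearMap.intervalIntegral_comp_comm (Φ t 0) hint] at h3
    have h4 : ∀ (s : ℝ) (x : EuclideanSpace ℝ (Fin n)), Φ t 0 (Φ 0 s x) = Φ t s x := by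
      intro s x
      rw [← ContinuousLinearMap.comp_apply, hΦcocycle]
    simp only [h4, map_sub] at h3
    rw [hyinit, hΦid] at h3
    simpa using h3
  -- Part 1
  have part1 : ∀ η, HasFDerivAt
      (fun ζ : EuclideanSpace ℝ (Fin n) => ζ - ∫ s in (0:ℝ)..t, Φ t s (f s (y t ζ s)))
      ((Φ t 0).comp (Dy t η 0)) η := by
    intro η
    have h := (Φ t 0).hasFDerivAt.comp η (hDy t η 0)
    apply h.congr_of_eventuallyEq
    filter_upwards with ζ
    rw [key ζ, sub_sub_cancel]
    rfl
  -- constants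
  set C : ℝ := Real.exp ((M + γ) * t) with hC
  have hCpos : 0 < C := Real.exp_pos _
  have hC1 : (1:ℝ) ≤ C := by
    rw [hC]; apply Real.one_le_exp; positivity
  set Lnn : NNReal := (M + γ).toNNReal with hLnn
  have hLcoe : (Lnn : ℝ) = M + γ := Real.coe_toNNReal _ hMγ.le
  -- comparison of trajectories (backwards in time)
  have traj : ∀ η₁ η₂ : EuclideanSpace ℝ (Fin n), ∀ s ∈ Set.Icc (0:ℝ) t,
      dist (y t η₁ s) (y t η₂ s) ≤ dist η₁ η₂ * C := by
    intro η₁ η₂ s hs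
    set w : ℝ → EuclideanSpace ℝ (Fin n) → EuclideanSpace ℝ (Fin n) :=
      fun r x => -(A (max (t - r) 0) x + f (max (t - r) 0) x) with hw
    have hwlip : ∀ r, LipschitzWith Lnn (w r) := by
      intro r
      apply LipschitzWith.of_dist_le_mul
      intro u v
      have h0 : (0:ℝ) ≤ max (t - r) 0 := le_max_right _ _
      rw [hLcoe]
      simp only [hw, dist_eq_norm, neg_sub_neg]
      have heq : (A (max (t - r) 0)) v + f (max (t - r) 0) v -
          ((A (max (t - r) 0)) u + f (max (t - r) 0) u)
          = ((A (max (t - r) 0)) v - (A (max (t - r) 0)) u)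
            + (f (max (t - r) 0) v - f (max (t - r) 0) u) := by abel
      rw [heq]
      refine (norm_add_le _ _).trans ?_
      have h1 : ‖(A (max (t - r) 0)) v - (A (max (t - r) 0)) u‖ ≤ M * ‖v - u‖ := by
        rw [← map_sub]
        exact ((A _).le_opNorm _).trans
          (mul_le_mul_of_nonneg_right (hAbdd _ h0) (norm_nonneg _))
      have h2 : ‖f (max (t - r) 0) v - f (max (t - r) 0) u‖ ≤ γ * ‖v - u‖ := hflip _ v u h0
      have := add_le_add h1 h2
      rw [norm_sub_rev u v]
      linarith
    have hmain : ∀ r ∈ Set.Icc (0:ℝ) t,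
        dist (y t η₁ (t - r)) (y t η₂ (t - r)) ≤ dist η₁ η₂ * Real.exp (↑Lnn * (r - 0)) := by
      refine dist_le_of_trajectories_ODE (v := w) hwlip ?_ ?_ ?_ ?_ ?_
      · exact fun r hr => (((hyderiv t η₁ (t - r) (sub_nonneg.2 hr.2)).continuousAt).comp
          ((continuous_const.sub continuous_id).continuousAt)).continuousWithinAt
      · intro r hr
        have h0 : (0:ℝ) ≤ t - r := sub_nonneg.2 hr.2.le
        have hd := HasDerivAt.scomp (x := r) (hyderiv t η₁ (t - r) h0)
          ((hasDerivAt_id r).const_sub t)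
        have hval : w r (y t η₁ (t - r)) =
            -((A (t - r)) (y t η₁ (t - r)) + f (t - r) (y t η₁ (t - r))) := by
          simp [hw, max_eq_left h0]
        rw [hval]
        refine HasDerivAt.hasDerivWithinAt ?_
        refine hd.congr_deriv ?_
        simp only [neg_smul, one_smul]
      · exact fun r hr => (((hyderiv t η₂ (t - r) (sub_nonneg.2 hr.2)).continuousAt).comp
          ((continuous_const.sub continuous_id).continuousAt)).continuousWithinAt
      · intro r hr
        have h0 : (0:ℝ) ≤ t - r := sub_nonneg.2 hr.2.le
        have hd := HasDerivAt.scomp (x := r) (hyderiv t η₂ (t - r) h0)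
          ((hasDerivAt_id r).const_sub t)
        have hval : w r (y t η₂ (t - r)) =
            -((A (t - r)) (y t η₂ (t - r)) + f (t - r) (y t η₂ (t - r))) := by
          simp [hw, max_eq_left h0]
        rw [hval]
        refine HasDerivAt.hasDerivWithinAt ?_
        refine hd.congr_deriv ?_
        simp only [neg_smul, one_smul]
      · simp [hyinit]
    have hmain2 := hmain (t - s) ⟨sub_nonneg.2 hs.2, by linarith [hs.1]⟩
    have hss : t - (t - s) = s := by ring
    rw [hss] at hmain2
    refine hmain2.trans ?_
    rw [hC, hLcoe]
    apply mul_le_mul_of_nonneg_left _ dist_nonneg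
    apply Real.exp_le_exp.2
    have := hs.1
    nlinarith [hMγ.le]
  -- bound on ‖Dy‖
  have dybound : ∀ (η' : EuclideanSpace ℝ (Fin n)), ∀ s ∈ Set.Icc (0:ℝ) t,
      ‖Dy t η' s‖ ≤ C := by
    intro η' s hs
    have hcont : ContinuousOn (fun r => Dy t η' (t - r)) (Set.Icc 0 t) := fun r hr =>
      (((hDyode t η' (t - r) (sub_nonneg.2 hr.2)).continuousAt).comp
        ((continuous_const.sub continuous_id).continuousAt)).continuousWithinAt
    have hder : ∀ r ∈ Set.Ico (0:ℝ) t, HasDerivWithinAt (fun r => Dy t η' (t - r))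
        (-((A (t - r) + Df (t - r) (y t η' (t - r))).comp (Dy t η' (t - r)))) (Set.Ici r) r := by
      intro r hr
      have h0 : (0:ℝ) ≤ t - r := sub_nonneg.2 hr.2.le
      have hd := HasDerivAt.scomp (x := r) (hDyode t η' (t - r) h0)
        ((hasDerivAt_id r).const_sub t)
      refine HasDerivAt.hasDerivWithinAt ?_
      refine hd.congr_deriv ?_
      simp only [neg_smul, one_smul]
    have hbound : ∀ r ∈ Set.Ico (0:ℝ) t,
        ‖-((A (t - r) + Df (t - r) (y t η' (t - r))).comp (Dy t η' (t - r)))‖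
          ≤ (M + γ) * ‖Dy t η' (t - r)‖ + 0 := by
      intro r hr
      have h0 : (0:ℝ) ≤ t - r := sub_nonneg.2 hr.2.le
      rw [norm_neg, add_zero]
      refine (ContinuousLinearMap.opNorm_comp_le _ _).trans ?_
      apply mul_le_mul_of_nonneg_right _ (norm_nonneg _)
      exact (norm_add_le _ _).trans (add_le_add (hAbdd _ h0) (hDfγ _ _ h0))
    have hmain : ∀ r ∈ Set.Icc (0:ℝ) t,
        ‖Dy t η' (t - r)‖ ≤ gronwallBound 1 (M + γ) 0 (r - 0) := by
      refine norm_le_gronwallBound_of_norm_deriv_right_le hcont hder ?_ ?_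
      · rw [sub_zero, hDyinit]; exact ContinuousLinearMap.norm_id_le
      · exact hbound
    have hmain2 := hmain (t - s) ⟨sub_nonneg.2 hs.2, by linarith [hs.1]⟩
    have hss : t - (t - s) = s := by ring
    rw [hss, sub_zero, gronwallBound_ε0, one_mul] at hmain2
    refine hmain2.trans ?_
    rw [hC]
    apply Real.exp_le_exp.2
    have := hs.1
    nlinarith [hMγ.le]
  -- continuity of η ↦ Dy t η 0
  have contDy : Continuous fun η' : EuclideanSpace ℝ (Fin n) => Dy t η' 0 := by
    rw [continuous_iff_continuousAt]
    intro η
    rw [Metric.continuousAt_iff]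
    intro ε hε
    have hYc : ContinuousOn (y t η) (Set.Icc 0 t) := fun s hs =>
      ((hyderiv t η s hs.1).continuousAt).continuousWithinAt
    have hKS : IsCompact ((y t η) '' Set.Icc 0 t) := isCompact_Icc.image_of_continuousOn hYc
    have hT1 : IsCompact (Metric.cthickening 1 ((y t η) '' Set.Icc 0 t)) := hKS.cthickening
    have hQ : IsCompact (Set.Icc (0:ℝ) t ×ˢ Metric.cthickening 1 ((y t η) '' Set.Icc 0 t)) :=
      isCompact_Icc.prod hT1
    have hunif := hQ.uniformContinuousOn_of_continuous hDfcont.continuousOn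
    rw [Metric.uniformContinuousOn_iff] at hunif
    set ε₂ : ℝ := ε * (M + γ) / (2 * C * C) with hε₂def
    have hε₂pos : 0 < ε₂ := by positivity
    obtain ⟨δ₁, hδ₁pos, hδ₁⟩ := hunif ε₂ hε₂pos
    refine ⟨min 1 δ₁ / (2 * C), by positivity, ?_⟩
    intro η' hη'
    -- closeness of trajectories
    have hclose : ∀ s ∈ Set.Icc (0:ℝ) t, dist (y t η' s) (y t η s) < min 1 δ₁ := by
      intro s hs
      refine (traj η' η s hs).trans_lt ?_
      calc dist η' η * C < (min 1 δ₁ / (2 * C)) * C :=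
            mul_lt_mul_of_pos_right hη' hCpos
        _ = min 1 δ₁ / 2 := by field_simp
        _ < min 1 δ₁ := by
            have : 0 < min 1 δ₁ := lt_min one_pos hδ₁pos
            linarith
    have hDfclose : ∀ s ∈ Set.Icc (0:ℝ) t,
        dist (Df s (y t η' s)) (Df s (y t η s)) < ε₂ := by
      intro s hs
      have hp : (s, y t η' s) ∈ Set.Icc (0:ℝ) t ×ˢ
          Metric.cthickening 1 ((y t η) '' Set.Icc 0 t) := by
        refine ⟨hs, ?_⟩
        exact Metric.mem_cthickening_of_dist_le _ (y t η s) 1 _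
          ⟨s, hs, rfl⟩ (le_trans (hclose s hs).le (min_le_left _ _))
      have hq' : (s, y t η s) ∈ Set.Icc (0:ℝ) t ×ˢ
          Metric.cthickening 1 ((y t η) '' Set.Icc 0 t) :=
        ⟨hs, Metric.self_subset_cthickening _ ⟨s, hs, rfl⟩⟩
      have hd : dist ((s, y t η' s)) ((s, y t η s)) < δ₁ := by
        rw [Prod.dist_eq]
        simp only [dist_self]
        rw [max_eq_right dist_nonneg]
        exact (hclose s hs).trans_le (min_le_right _ _)
      exact hδ₁ (s, y t η' s) hp (s, y t η s) hq' hd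
    -- approximate trajectories
    set v : ℝ → ((EuclideanSpace ℝ (Fin n)) →L[ℝ] (EuclideanSpace ℝ (Fin n))) →
        ((EuclideanSpace ℝ (Fin n)) →L[ℝ] (EuclideanSpace ℝ (Fin n))) :=
      fun r W => -((A (max (t - r) 0) + Df (max (t - r) 0) (y t η (max (t - r) 0))).comp W)
      with hv
    have hvlip : ∀ r, LipschitzWith Lnn (v r) := by
      intro r
      apply LipschitzWith.of_dist_le_mul
      intro W W'
      have h0 : (0:ℝ) ≤ max (t - r) 0 := le_max_right _ _
      rw [hLcoe]
      simp only [hv, dist_eq_norm, neg_sub_neg, ← ContinuousLinearMap.comp_sub]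
      rw [norm_sub_rev W W']
      refine (ContinuousLinearMap.opNorm_comp_le _ _).trans ?_
      apply mul_le_mul_of_nonneg_right _ (norm_nonneg _)
      exact (norm_add_le _ _).trans (add_le_add (hAbdd _ h0) (hDfγ _ _ h0))
    have hmain : ∀ r ∈ Set.Icc (0:ℝ) t,
        dist (Dy t η' (t - r)) (Dy t η (t - r)) ≤
          gronwallBound 0 Lnn (ε₂ * C + 0) (r - 0) := by
      refine dist_le_of_approx_trajectories_ODE (v := v) hvlip
        (f' := fun r => -((A (t - r) + Df (t - r) (y t η' (t - r))).comp (Dy t η' (t - r))))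
        (g' := fun r => -((A (t - r) + Df (t - r) (y t η (t - r))).comp (Dy t η (t - r))))
        ?_ ?_ ?_ ?_ ?_ ?_ ?_
      · exact fun r hr => (((hDyode t η' (t - r) (sub_nonneg.2 hr.2)).continuousAt).comp
          ((continuous_const.sub continuous_id).continuousAt)).continuousWithinAt
      · intro r hr
        have h0 : (0:ℝ) ≤ t - r := sub_nonneg.2 hr.2.le
        have hd := HasDerivAt.scomp (x := r) (hDyode t η' (t - r) h0)
          ((hasDerivAt_id r).const_sub t)
        simp only [Function.comp] at hd
        refine HasDerivAt.hasDerivWithinAt ?_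
        refine hd.congr_deriv ?_
        simp only [neg_smul, one_smul]
      · intro r hr
        have h0 : (0:ℝ) ≤ t - r := sub_nonneg.2 hr.2.le
        have hmax : max (t - r) 0 = t - r := max_eq_left h0
        have hsm : (t - r) ∈ Set.Icc (0:ℝ) t := ⟨h0, by linarith [hr.1]⟩
        rw [dist_eq_norm]
        simp only [hv, hmax, neg_sub_neg, ← ContinuousLinearMap.sub_comp]
        have hAB : (A (t - r) + Df (t - r) (y t η (t - r)))
            - (A (t - r) + Df (t - r) (y t η' (t - r)))
            = Df (t - r) (y t η (t - r)) - Df (t - r) (y t η' (t - r)) := by abel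
        rw [hAB]
        refine (ContinuousLinearMap.opNorm_comp_le _ _).trans ?_
        have h1 : ‖Df (t - r) (y t η (t - r)) - Df (t - r) (y t η' (t - r))‖ ≤ ε₂ := by
          rw [← dist_eq_norm, dist_comm]
          exact (hDfclose _ hsm).le
        exact mul_le_mul h1 (dybound η' _ hsm) (norm_nonneg _) hε₂pos.le
      · exact fun r hr => (((hDyode t η (t - r) (sub_nonneg.2 hr.2)).continuousAt).comp
          ((continuous_const.sub continuous_id).continuousAt)).continuousWithinAt
      · intro r hr
        have h0 : (0:ℝ) ≤ t - r := sub_nonneg.2 hr.2.le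
        have hd := HasDerivAt.scomp (x := r) (hDyode t η (t - r) h0)
          ((hasDerivAt_id r).const_sub t)
        simp only [Function.comp] at hd
        refine HasDerivAt.hasDerivWithinAt ?_
        refine hd.congr_deriv ?_
        simp only [neg_smul, one_smul]
      · intro r hr
        have h0 : (0:ℝ) ≤ t - r := sub_nonneg.2 hr.2.le
        have hmax : max (t - r) 0 = t - r := max_eq_left h0
        simp [hv, hmax]
      · simp [hDyinit]
    have hmain2 := hmain t ⟨ht, le_refl t⟩
    rw [sub_self, sub_zero] at hmain2
    refine hmain2.trans_lt ?_
    have hLne : (Lnn : ℝ) ≠ 0 := by rw [hLcoe]; exact hMγ.ne'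
    rw [gronwallBound_of_K_ne_0 hLne]
    simp only [zero_mul, zero_add, add_zero]
    rw [hLcoe]
    have hexp : Real.exp ((M + γ) * t) = C := by rw [hC]
    rw [hexp]
    -- (ε₂ * C) / (M + γ) * (C - 1) < ε
    rw [hε₂def]
    have h1 : ε * (M + γ) / (2 * C * C) * C / (M + γ) * (C - 1) = ε * (C - 1) / (2 * C) := by
      field_simp
    rw [h1]
    have h2 : ε * (C - 1) / (2 * C) ≤ ε / 2 := by
      rw [div_le_div_iff₀ (by positivity) (by norm_num)]
      nlinarith
    linarith
  have part2 : Continuous fun η : EuclideanSpace ℝ (Fin n) => (Φ t 0).comp (Dy t η 0) :=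
    continuous_const.clm_comp contDy
  -- Part 3 : determinants
  have detmul : ∀ (P Q : (EuclideanSpace ℝ (Fin n)) →L[ℝ] (EuclideanSpace ℝ (Fin n))),
      LinearMap.det ((P.comp Q).toLinearMap)
        = LinearMap.det P.toLinearMap * LinearMap.det Q.toLinearMap := by
    intro P Q
    exact LinearMap.det_comp P.toLinearMap Q.toLinearMap
  have detid : LinearMap.det
      ((ContinuousLinearMap.id ℝ (EuclideanSpace ℝ (Fin n))).toLinearMap) = 1 := by
    simp
  have detΦ_ne : ∀ r : ℝ, LinearMap.det (Φ r 0).toLinearMap ≠ 0 := by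
    intro r
    have h1 : LinearMap.det (Φ r 0).toLinearMap * LinearMap.det (Φ 0 r).toLinearMap = 1 := by
      rw [← detmul, hcomp_id r, detid]
    intro h
    rw [h, zero_mul] at h1
    exact zero_ne_one h1
  have detcont : Continuous fun r : ℝ => LinearMap.det (Φ r 0).toLinearMap :=
    ContinuousLinearMap.continuous_det.comp (contΦfst 0)
  have detΦ_pos : 0 < LinearMap.det (Φ t 0).toLinearMap := by
    rcases lt_or_ge 0 (LinearMap.det (Φ t 0).toLinearMap) with h | h
    · exact h
    · exfalso
      have hlt : LinearMap.det (Φ t 0).toLinearMap < 0 := lt_of_le_of_ne h (detΦ_ne t)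
      have hmem : (0:ℝ) ∈ Set.Icc (LinearMap.det (Φ t 0).toLinearMap)
          (LinearMap.det (Φ 0 0).toLinearMap) := by
        constructor
        · exact hlt.le
        · rw [hΦid, detid]; norm_num
      obtain ⟨c, hc, hc0⟩ := intermediate_value_Icc' ht detcont.continuousOn hmem
      exact detΦ_ne c hc0
  refine ⟨part1, part2, ?_⟩
  intro η
  -- invertibility of Dy t η s for s ∈ [0, t]
  have hDyinv : ∀ s ∈ Set.Icc (0:ℝ) t,
      (Dy s (y t η s) t).comp (Dy t η s) = ContinuousLinearMap.id ℝ _ := by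
    intro s hs
    have hidfun : ∀ ζ : EuclideanSpace ℝ (Fin n), y s (y t ζ s) t = ζ := by
      intro ζ
      set v0 : ℝ → EuclideanSpace ℝ (Fin n) → EuclideanSpace ℝ (Fin n) :=
        fun r x => A (max r 0) x + f (max r 0) x with hv0
      have hv0lip : ∀ r, LipschitzOnWith Lnn (v0 r) Set.univ := by
        intro r
        apply LipschitzWith.lipschitzOnWith
        apply LipschitzWith.of_dist_le_mul
        intro u v
        have h0 : (0:ℝ) ≤ max r 0 := le_max_right _ _
        rw [hLcoe]
        simp only [hv0, dist_eq_norm]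
        have heq : (A (max r 0)) u + f (max r 0) u - ((A (max r 0)) v + f (max r 0) v)
            = ((A (max r 0)) u - (A (max r 0)) v) + (f (max r 0) u - f (max r 0) v) := by abel
        rw [heq]
        refine (norm_add_le _ _).trans ?_
        have h1 : ‖(A (max r 0)) u - (A (max r 0)) v‖ ≤ M * ‖u - v‖ := by
          rw [← map_sub]
          exact ((A _).le_opNorm _).trans
            (mul_le_mul_of_nonneg_right (hAbdd _ h0) (norm_nonneg _))
        have h2 : ‖f (max r 0) u - f (max r 0) v‖ ≤ γ * ‖u - v‖ := hflip _ u v h0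
        linarith
      have huniq := ODE_solution_unique_of_mem_Icc_right (v := v0) (K := Lnn)
        (s := fun _ => Set.univ) (fun r _ => hv0lip r)
        (f := y s (y t ζ s)) (g := y t ζ) (a := s) (b := t)
        (fun r hr => ((hyderiv s (y t ζ s) r (hs.1.trans hr.1)).continuousAt).continuousWithinAt)
        (by
          intro r hr
          have h0 : (0:ℝ) ≤ r := hs.1.trans hr.1
          have hmax : max r 0 = r := max_eq_left h0
          have := hyderiv s (y t ζ s) r h0
          simp only [hv0, hmax]
          exact this.hasDerivWithinAt)
        (fun _ _ => trivial)
        (fun r hr => ((hyderiv t ζ r (hs.1.trans hr.1)).continuousAt).continuousWithinAt)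
        (by
          intro r hr
          have h0 : (0:ℝ) ≤ r := hs.1.trans hr.1
          have hmax : max r 0 = r := max_eq_left h0
          have := hyderiv t ζ r h0
          simp only [hv0, hmax]
          exact this.hasDerivWithinAt)
        (fun _ _ => trivial)
        (by rw [hyinit])
      have := huniq ⟨hs.2, le_refl t⟩
      rw [this, hyinit]
    have h1 : HasFDerivAt (fun ζ => y s (y t ζ s) t)
        ((Dy s (y t η s) t).comp (Dy t η s)) η :=
      by have := (hDy s (y t η s) t).comp η (hDy t η s); exact this
    have h3 : (fun ζ : EuclideanSpace ℝ (Fin n) => y s (y t ζ s) t) = fun ζ => ζ :=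
      funext hidfun
    rw [h3] at h1
    exact h1.unique (hasFDerivAt_id η)
  have detDy_ne : ∀ s ∈ Set.Icc (0:ℝ) t, LinearMap.det (Dy t η s).toLinearMap ≠ 0 := by
    intro s hs
    have h1 : LinearMap.det (Dy s (y t η s) t).toLinearMap
        * LinearMap.det (Dy t η s).toLinearMap = 1 := by
      rw [← detmul, hDyinv s hs, detid]
    intro h
    rw [h, mul_zero] at h1
    exact zero_ne_one h1
  have detDycont : ContinuousOn (fun s : ℝ => LinearMap.det (Dy t η s).toLinearMap)
      (Set.Icc 0 t) := by
    intro s hs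
    exact (ContinuousLinearMap.continuous_det.continuousAt.comp
      ((hDyode t η s hs.1).continuousAt)).continuousWithinAt
  have detDy_pos : 0 < LinearMap.det (Dy t η 0).toLinearMap := by
    rcases lt_or_ge 0 (LinearMap.det (Dy t η 0).toLinearMap) with h | h
    · exact h
    · exfalso
      have hlt : LinearMap.det (Dy t η 0).toLinearMap < 0 :=
        lt_of_le_of_ne h (detDy_ne 0 ⟨le_refl 0, ht⟩)
      have hmem : (0:ℝ) ∈ Set.Icc (LinearMap.det (Dy t η 0).toLinearMap)
          (LinearMap.det (Dy t η t).toLinearMap) := by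
        constructor
        · exact hlt.le
        · rw [hDyinit, detid]; norm_num
      obtain ⟨c, hc, hc0⟩ := intermediate_value_Icc ht detDycont hmem
      exact detDy_ne c hc hc0
  rw [detmul]
  exact mul_pos detΦ_pos detDy_pos
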